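/- Let ρ₁ ≥ ⋯ ≥ ρₙ ≥ 0 satisfy ρₖ ≤ C₀k^{-α} for some C₀ > 0 and α > 1. Then there exists a constant C > 0, depending only on C₀ and α (not on n or λ), such that for every λ > 0, Σₖ₌₁ⁿ ρₖ/(λ + ρₖ) ≤ Cλ^{-1/α}. -/

import Mathlib

open Real Finset

/-- Bernoulli-type step inequality. -/
lemma stmt2_step (α : ℝ) (hα : 1 < α) (a : ℝ) (ha : 1 ≤ a) :
    (α - 1) * (a + 1) ^ (-α) ≤ a ^ (1 - α) - (a + 1) ^ (1 - α) := by
  have ha0 : (0:ℝ) < a := lt_of_lt_of_le one_pos ha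
  have hb : (0:ℝ) < a + 1 := by linarith
  set p : ℝ := α - 1 with hp_def
  have hp : 0 < p := by simp only [hp_def]; linarith
  -- key claim : 1 + p/(a+1) ≤ ((a+1)/a)^p
  have key : 1 + p / (a + 1) ≤ ((a + 1) / a) ^ p := by
    rcases le_or_gt 1 p with hp1 | hp1
    · have hB := one_add_mul_self_le_rpow_one_add (s := 1/a)
        (le_trans (by norm_num : (-1:ℝ) ≤ 0) (by positivity)) hp1
      have h1 : (1 : ℝ) + 1/a = (a+1)/a := by field_simp
      rw [h1] at hB
      have h2 : p / (a+1) ≤ p * (1/a) := by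
        rw [mul_one_div, div_le_div_iff₀ hb ha0]; nlinarith
      linarith
    · have hs1 : (-1:ℝ) ≤ -(1/(a+1)) := by
        rw [neg_le_neg_iff, div_le_one hb]; linarith
      have hB := rpow_one_add_le_one_add_mul_self (s := -(1/(a+1))) hs1 hp.le hp1.le
      have h1 : (1 : ℝ) + -(1/(a+1)) = a/(a+1) := by field_simp; ring
      have h2 : p * -(1/(a+1)) = -(p/(a+1)) := by ring
      rw [h1, h2] at hB
      set t : ℝ := p / (a+1) with ht_def
      have ht0 : 0 < t := by positivity
      have ht1 : t < 1 := by
        rw [ht_def, div_lt_one hb]; linarith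
      have hBt : (a/(a+1)) ^ p ≤ 1 - t := by linarith
      have hX : (0:ℝ) < (a/(a+1)) ^ p := rpow_pos_of_pos (by positivity) _
      have hprod : ((a+1)/a) ^ p * (a/(a+1)) ^ p = 1 := by
        rw [← Real.mul_rpow (by positivity) (by positivity)]
        rw [show (a+1)/a * (a/(a+1)) = 1 by field_simp]
        exact Real.one_rpow p
      nlinarith [hX, hBt, hprod, mul_pos ht0 ht0]
  -- multiply by (a+1)^(-p)
  have hbp : (0:ℝ) < (a+1) ^ (-p) := rpow_pos_of_pos hb _
  have hmul := mul_le_mul_of_nonneg_left key hbp.le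
  have e1 : (a+1) ^ (-p) * (((a+1)/a) ^ p) = a ^ (-p) := by
    rw [Real.div_rpow hb.le ha0.le, Real.rpow_neg hb.le, Real.rpow_neg ha0.le]
    field_simp
  have e2 : (a+1) ^ (-p) * (1 + p/(a+1)) = (a+1) ^ (1-α) + p * (a+1) ^ (-α) := by
    have h3 : (a+1) ^ (-α) = (a+1) ^ (-p) / (a+1) := by
      rw [eq_div_iff hb.ne', ← Real.rpow_add_one hb.ne']
      congr 1
      simp only [hp_def]; ring
    have h4 : (1 - α : ℝ) = -p := by simp only [hp_def]; ring
    rw [h3, h4]; field_simp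
  rw [e1, e2] at hmul
  have h4 : a ^ (-p) = a ^ (1-α) := by congr 1; simp only [hp_def]; ring
  rw [h4] at hmul
  linarith

/-- Tail sum estimate. -/
lemma stmt2_tail (α : ℝ) (hα : 1 < α) (m n : ℕ) (hm : 1 ≤ m) :
    ∑ k ∈ Finset.Ico m n, ((k:ℝ) + 1) ^ (-α) ≤ (m:ℝ) ^ (1-α) / (α - 1) := by
  have hα1 : (0:ℝ) < α - 1 := by linarith
  have hstep : ∀ k ∈ Finset.Ico m n, ((k:ℝ)+1) ^ (-α)
      ≤ ((k:ℝ) ^ (1-α) - ((k:ℝ)+1) ^ (1-α)) / (α - 1) := by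
    intro k hk
    have hk1 : 1 ≤ k := le_trans hm (Finset.mem_Ico.mp hk).1
    have hk1' : (1:ℝ) ≤ (k:ℝ) := by exact_mod_cast hk1
    rw [le_div_iff₀ hα1, mul_comm]
    exact stmt2_step α hα (k:ℝ) hk1'
  have htel : ∑ k ∈ Finset.Ico m n, ((k:ℝ) ^ (1-α) - ((k:ℝ)+1) ^ (1-α))
      ≤ (m:ℝ) ^ (1-α) := by
    rw [Finset.sum_Ico_eq_sum_range]
    have hterm : ∀ k : ℕ, (((m+k : ℕ)):ℝ) ^ (1-α) - ((((m+k:ℕ)):ℝ) + 1) ^ (1-α)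
        = (fun i : ℕ => ((m:ℝ)+(i:ℝ)) ^ (1-α)) k
          - (fun i : ℕ => ((m:ℝ)+(i:ℝ)) ^ (1-α)) (k+1) := by
      intro k
      simp only []
      push_cast
      ring_nf
    rw [Finset.sum_congr rfl (fun k _ => hterm k),
      Finset.sum_range_sub' (fun i : ℕ => ((m:ℝ)+(i:ℝ)) ^ (1-α)) (n-m)]
    simp only [Nat.cast_zero, add_zero]
    have : (0:ℝ) ≤ ((m:ℝ) + ((n-m : ℕ):ℝ)) ^ (1-α) := by positivity
    linarith
  calc ∑ k ∈ Finset.Ico m n, ((k:ℝ) + 1) ^ (-α)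
      ≤ ∑ k ∈ Finset.Ico m n, ((k:ℝ) ^ (1-α) - ((k:ℝ)+1) ^ (1-α)) / (α - 1) :=
        Finset.sum_le_sum hstep
    _ = (∑ k ∈ Finset.Ico m n, ((k:ℝ) ^ (1-α) - ((k:ℝ)+1) ^ (1-α))) / (α-1) := by
        rw [Finset.sum_div]
    _ ≤ (m:ℝ) ^ (1-α) / (α - 1) := by gcongr

/-- If `ρₖ ≤ C₀ k^{-α}` with `α > 1`, then there is `C = C(C₀,α)` (independent of `n`
and `λ`) with `Σₖ ρₖ/(λ+ρₖ) ≤ C λ^{-1/α}` for every `λ > 0`. -/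
theorem stmt2 (C₀ α : ℝ) (hC₀ : 0 < C₀) (hα : 1 < α) :
    ∃ C > (0 : ℝ), ∀ (n : ℕ) (ρ : Fin n → ℝ),
      (∀ k, 0 ≤ ρ k) →
      (∀ i j : Fin n, i ≤ j → ρ j ≤ ρ i) →
      (∀ k : Fin n, ρ k ≤ C₀ * ((k : ℝ) + 1) ^ (-α)) →
      ∀ lam : ℝ, 0 < lam →
        ∑ k, ρ k / (lam + ρ k) ≤ C * lam ^ (-1 / α) := by
  have hα0 : (0:ℝ) < α := by linarith
  have hα1 : (0:ℝ) < α - 1 := by linarith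
  -- the p-series sum
  have hsum : Summable (fun j : ℕ => ((j:ℝ) + 1) ^ (-α)) := by
    have h := (Real.summable_nat_rpow (p := -α)).2 (by linarith)
    have h2 := (summable_nat_add_iff 1).2 h
    refine h2.congr fun j => ?_
    push_cast
    rfl
  set Z : ℝ := ∑' j : ℕ, ((j:ℝ) + 1) ^ (-α) with hZ_def
  have hZ0 : 0 ≤ Z := tsum_nonneg fun j => by positivity
  set K : ℝ := Z + 1 + 2 ^ (α-1) / (α-1) with hK_def
  have hK0 : 0 < K := by
    have : (0:ℝ) < 2 ^ (α-1) / (α-1) := by positivity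
    simp only [hK_def]; linarith
  refine ⟨C₀ ^ (1/α) * K, by positivity, ?_⟩
  intro n ρ hρ0 hmono hdecay lam hlam
  rw [neg_div]
  have hlam' : (0:ℝ) < lam ^ (-(1/α)) := by positivity
  -- termwise bound by min
  have hterm : ∀ k : Fin n, ρ k / (lam + ρ k)
      ≤ min 1 ((C₀ / lam) * (((k:ℕ):ℝ) + 1) ^ (-α)) := by
    intro k
    have h0 := hρ0 k
    have hd : (0:ℝ) < lam + ρ k := by linarith
    refine le_min ?_ ?_
    · rw [div_le_one hd]; linarith
    · calc ρ k / (lam + ρ k) ≤ ρ k / lam := by gcongr; linarith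
        _ ≤ (C₀ * (((k:ℕ):ℝ) + 1) ^ (-α)) / lam := by gcongr; exact hdecay k
        _ = (C₀ / lam) * (((k:ℕ):ℝ) + 1) ^ (-α) := by ring
  have hmin : ∑ k, ρ k / (lam + ρ k)
      ≤ ∑ k ∈ Finset.range n, min 1 ((C₀ / lam) * ((k:ℝ) + 1) ^ (-α)) := by
    rw [← Fin.sum_univ_eq_sum_range (fun k => min 1 ((C₀ / lam) * ((k:ℝ) + 1) ^ (-α))) n]
    exact Finset.sum_le_sum fun k _ => hterm k
  rcases le_or_gt C₀ lam with hcase | hcase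
  · -- easy case : λ ≥ C₀
    have hsum1 : ∑ k ∈ Finset.range n, min 1 ((C₀ / lam) * ((k:ℝ) + 1) ^ (-α))
        ≤ (C₀ / lam) * Z := by
      calc ∑ k ∈ Finset.range n, min 1 ((C₀ / lam) * ((k:ℝ) + 1) ^ (-α))
          ≤ ∑ k ∈ Finset.range n, (C₀ / lam) * ((k:ℝ) + 1) ^ (-α) :=
            Finset.sum_le_sum fun k _ => min_le_right _ _
        _ = (C₀ / lam) * ∑ k ∈ Finset.range n, ((k:ℝ) + 1) ^ (-α) := by
            rw [Finset.mul_sum]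
        _ ≤ (C₀ / lam) * Z :=
            mul_le_mul_of_nonneg_left
              (Summable.sum_le_tsum (Finset.range n) (fun i _ => by positivity) hsum)
              (by positivity)
    have hCl : C₀ / lam ≤ C₀ ^ (1/α) * lam ^ (-(1/α)) := by
      have e : C₀ = C₀ ^ (1/α) * C₀ ^ (1 - 1/α) := by
        rw [← Real.rpow_add hC₀]; norm_num
      have h2 : C₀ ^ (1 - 1/α) ≤ lam ^ (1 - 1/α) := by
        apply Real.rpow_le_rpow hC₀.le hcase
        have : (1:ℝ)/α < 1 := by rw [div_lt_one hα0]; exact hα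
        linarith
      have h3 : lam ^ (1 - 1/α) / lam = lam ^ (-(1/α)) := by
        rw [div_eq_iff hlam.ne', ← Real.rpow_add_one hlam.ne']
        congr 1
        ring
      calc C₀ / lam = C₀ ^ (1/α) * (C₀ ^ (1 - 1/α) / lam) := by rw [← mul_div_assoc, ← e]
        _ ≤ C₀ ^ (1/α) * (lam ^ (1 - 1/α) / lam) := by gcongr
        _ = C₀ ^ (1/α) * lam ^ (-(1/α)) := by rw [h3]
    calc ∑ k, ρ k / (lam + ρ k) ≤ (C₀ / lam) * Z := le_trans hmin hsum1
      _ ≤ (C₀ ^ (1/α) * lam ^ (-(1/α))) * Z := by gcongr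
      _ ≤ C₀ ^ (1/α) * K * lam ^ (-(1/α)) := by
          rw [hK_def]
          have h4 : (0:ℝ) ≤ 2 ^ (α-1) / (α-1) := by positivity
          nlinarith [Real.rpow_pos_of_pos hC₀ (1/α), hlam', mul_pos (Real.rpow_pos_of_pos hC₀ (1/α)) hlam']
  · -- main case : λ < C₀
    set T : ℝ := (C₀ / lam) ^ (1/α) with hT_def
    have hCl1 : (1:ℝ) < C₀ / lam := (one_lt_div hlam).2 hcase
    have hT1 : 1 < T := Real.one_lt_rpow_iff_of_pos (by positivity) |>.2 (Or.inl ⟨hCl1, by positivity⟩)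
    have hT0 : (0:ℝ) < T := by linarith
    set m : ℕ := ⌊T⌋₊ with hm_def
    have hm1 : 1 ≤ m := Nat.le_floor (by exact_mod_cast hT1.le)
    have hmT : (m:ℝ) ≤ T := Nat.floor_le hT0.le
    have hTm : T ≤ 2 * m := by
      have h1 := Nat.lt_floor_add_one T
      have h2 : (1:ℝ) ≤ (m:ℝ) := by exact_mod_cast hm1
      linarith
    have hm0 : (0:ℝ) < (m:ℝ) := by exact_mod_cast hm1
    -- C₀/lam = T^α
    have hTα : T ^ α = C₀ / lam := by
      rw [hT_def, ← Real.rpow_mul (by positivity), one_div_mul_cancel hα0.ne', Real.rpow_one]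
    set f : ℕ → ℝ := fun k => min 1 ((C₀ / lam) * ((k:ℝ) + 1) ^ (-α)) with hf_def
    have hf0 : ∀ k : ℕ, 0 ≤ f k := fun k => le_min zero_le_one (by positivity)
    set N : ℕ := max n m with hN_def
    have hsplit : ∑ k ∈ Finset.range n, f k
        ≤ (m:ℝ) + (C₀ / lam) * ((m:ℝ) ^ (1-α) / (α-1)) := by
      have h1 : ∑ k ∈ Finset.range n, f k ≤ ∑ k ∈ Finset.range N, f k :=
        Finset.sum_le_sum_of_subset_of_nonneg
          (Finset.range_subset_range.2 (le_max_left _ _)) (fun i _ _ => hf0 i)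
      have h2 : ∑ k ∈ Finset.range N, f k
          = ∑ k ∈ Finset.range m, f k + ∑ k ∈ Finset.Ico m N, f k :=
        (Finset.sum_range_add_sum_Ico f (le_max_right _ _)).symm
      have h3 : ∑ k ∈ Finset.range m, f k ≤ (m:ℝ) := by
        calc ∑ k ∈ Finset.range m, f k ≤ ∑ k ∈ Finset.range m, 1 :=
              Finset.sum_le_sum fun k _ => min_le_left _ _
          _ = (m:ℝ) := by simp
      have h4 : ∑ k ∈ Finset.Ico m N, f k ≤ (C₀ / lam) * ((m:ℝ) ^ (1-α) / (α-1)) := by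
        calc ∑ k ∈ Finset.Ico m N, f k
            ≤ ∑ k ∈ Finset.Ico m N, (C₀ / lam) * ((k:ℝ) + 1) ^ (-α) :=
              Finset.sum_le_sum fun k _ => min_le_right _ _
          _ = (C₀ / lam) * ∑ k ∈ Finset.Ico m N, ((k:ℝ) + 1) ^ (-α) := by
              rw [Finset.mul_sum]
          _ ≤ (C₀ / lam) * ((m:ℝ) ^ (1-α) / (α-1)) :=
              mul_le_mul_of_nonneg_left (stmt2_tail α hα m N hm1) (by positivity)
      linarith
    -- estimate the two pieces by T
    have h5 : (m:ℝ) ^ (1-α) ≤ (T/2) ^ (1-α) :=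
      Real.rpow_le_rpow_of_nonpos (by positivity) (by linarith) (by linarith)
    have h6 : (T/2) ^ (1-α) = T ^ (1-α) * 2 ^ (α-1) := by
      rw [Real.div_rpow hT0.le (by norm_num : (0:ℝ) ≤ 2)]
      rw [show (1-α : ℝ) = -(α-1) by ring, Real.rpow_neg (by norm_num : (0:ℝ) ≤ 2)]
      rw [div_eq_mul_inv, inv_inv]
    have h7 : T ^ α * T ^ (1-α) = T := by
      rw [← Real.rpow_add hT0]; norm_num
    have h8 : (C₀ / lam) * ((m:ℝ) ^ (1-α) / (α-1)) ≤ T * (2 ^ (α-1) / (α-1)) := by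
      rw [← hTα]
      calc T ^ α * ((m:ℝ) ^ (1-α) / (α-1)) ≤ T ^ α * ((T ^ (1-α) * 2 ^ (α-1)) / (α-1)) := by
            apply mul_le_mul_of_nonneg_left _ (by positivity)
            rw [div_le_div_iff₀ hα1 hα1]
            have := h5.trans_eq h6
            nlinarith
        _ = (T ^ α * T ^ (1-α)) * (2 ^ (α-1) / (α-1)) := by ring
        _ = T * (2 ^ (α-1) / (α-1)) := by rw [h7]
    have hTval : T = C₀ ^ (1/α) * lam ^ (-(1/α)) := by
      rw [hT_def, Real.div_rpow hC₀.le hlam.le, Real.rpow_neg hlam.le, div_eq_mul_inv]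
    have hfinal : ∑ k ∈ Finset.range n, f k ≤ T * K := by
      have hc : (0:ℝ) ≤ 2 ^ (α-1) / (α-1) := by positivity
      have : (1:ℝ) + 2 ^ (α-1) / (α-1) ≤ K := by rw [hK_def]; linarith
      calc ∑ k ∈ Finset.range n, f k ≤ (m:ℝ) + (C₀ / lam) * ((m:ℝ) ^ (1-α) / (α-1)) := hsplit
        _ ≤ T + T * (2 ^ (α-1) / (α-1)) := by linarith [h8, hmT]
        _ = T * (1 + 2 ^ (α-1) / (α-1)) := by ring
        _ ≤ T * K := mul_le_mul_of_nonneg_left this hT0.le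
    calc ∑ k, ρ k / (lam + ρ k) ≤ ∑ k ∈ Finset.range n, f k := hmin
      _ ≤ T * K := hfinal
      _ = C₀ ^ (1/α) * K * lam ^ (-(1/α)) := by rw [hTval]; ring
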